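/- For any S-tight level ranking f on a nonempty finite set S, the rank of f is odd, and the number of states mapped to odd values is at least (rank(f)+1)/2; consequently |S| ≥ (rank(f)+1)/2. -/
import Mathlib


/-- `f` is an `S`-tight level ranking: for some `n` with `1 ≤ n ≤ |S|`,
`f` maps `S` into `{0, 1, …, 2n−1}` and onto the odd numbers `{1, 3, …, 2n−1}`. -/
def Tight {Q : Type*} (S : Finset Q) (f : Q → ℕ) : Prop :=
  ∃ n : ℕ, 1 ≤ n ∧ n ≤ S.card ∧ (∀ q ∈ S, f q ≤ 2 * n - 1) ∧
    (∀ k : ℕ, Odd k → k ≤ 2 * n - 1 → ∃ q ∈ S, f q = k)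

/-- The rank of a ranking function on `S` is its maximum value on `S`. -/
def rank {Q : Type*} (S : Finset Q) (f : Q → ℕ) : ℕ := S.sup f

theorem stmt2 {Q : Type*} (S : Finset Q) (f : Q → ℕ)
    (hS : S.Nonempty) (h : Tight S f) :
    Odd (rank S f) ∧
    (rank S f + 1) / 2 ≤ (S.filter fun q => Odd (f q)).card ∧
    (rank S f + 1) / 2 ≤ S.card := by
  obtain ⟨n, hn1, hnS, hub, hsurj⟩ := h
  have hodd : Odd (2 * n - 1) := ⟨n - 1, by omega⟩
  have hrank : rank S f = 2 * n - 1 := by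
    apply le_antisymm
    · exact Finset.sup_le hub
    · obtain ⟨q, hq, hfq⟩ := hsurj (2 * n - 1) hodd le_rfl
      exact hfq ▸ Finset.le_sup hq
  have hdiv : (rank S f + 1) / 2 = n := by rw [hrank]; omega
  have hcard : n ≤ (S.filter fun q => Odd (f q)).card := by
    have : (Finset.range n).card ≤ (S.filter fun q => Odd (f q)).card := by
      apply Finset.card_le_card_of_surjOn (fun q => (f q - 1) / 2)
      intro i hi
      simp only [Finset.coe_range, Set.mem_Iio] at hi
      obtain ⟨q, hq, hfq⟩ := hsurj (2 * i + 1) ⟨i, by ring⟩ (by omega)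
      refine ⟨q, ?_, by simp only [hfq]; omega⟩
      simp only [Finset.coe_filter, Set.mem_setOf_eq]
      exact ⟨hq, hfq ▸ ⟨i, by ring⟩⟩
    simpa using this
  refine ⟨hrank ▸ hodd, hdiv ▸ hcard, hdiv ▸ le_trans hcard (Finset.card_le_card (Finset.filter_subset _ _))⟩
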